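/- Let F : ℝ → ℝ be C¹ with F(ρ*) = 0, F′(ρ*) = 0, F″(ρ*) exists with F″(ρ*) < 0, and F(ρ) < 0 for ρ > ρ*. Then any solution of ρ′ = F(ρ) with ρ(0) > ρ* close enough to ρ* converges to ρ* as x → ∞ at an algebraic rate: there exist constants 0 < c₁ ≤ c₂ such that c₁/x ≤ ρ(x) − ρ* ≤ c₂/x for all large x. -/

import Mathlib

open Set Filter Topology

/-- MVT-type helper: derivative bounded above by `C` gives `g b - g a ≤ C * (b - a)`. -/
lemma mvt_upper (g g' : ℝ → ℝ) {a b C : ℝ} (hab : a ≤ b)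
    (hg : ∀ t ∈ Set.Icc a b, HasDerivAt g (g' t) t)
    (hC : ∀ t ∈ Set.Ioo a b, g' t ≤ C) : g b - g a ≤ C * (b - a) := by
  have hmono : MonotoneOn (fun t => C * t - g t) (Set.Icc a b) := by
    apply monotoneOn_of_deriv_nonneg (convex_Icc a b)
    · exact fun t ht =>
        ((continuousAt_const.mul continuousAt_id).sub (hg t ht).continuousAt).continuousWithinAt
    · intro t ht
      rw [interior_Icc] at ht
      exact (((hasDerivAt_id t).const_mul C).sub (hg t (Ioo_subset_Icc_self ht))).differentiableAt.differentiableWithinAt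
    · intro t ht
      rw [interior_Icc] at ht
      have hd : HasDerivAt (fun t => C * t - g t) (C * 1 - g' t) t :=
        ((hasDerivAt_id t).const_mul C).sub (hg t (Ioo_subset_Icc_self ht))
      rw [hd.deriv]
      have := hC t ht
      linarith
  have := hmono (Set.left_mem_Icc.2 hab) (Set.right_mem_Icc.2 hab) hab
  simp only at this
  linarith

/-- MVT-type helper: derivative bounded below by `C` gives `C * (b - a) ≤ g b - g a`. -/
lemma mvt_lower (g g' : ℝ → ℝ) {a b C : ℝ} (hab : a ≤ b)
    (hg : ∀ t ∈ Set.Icc a b, HasDerivAt g (g' t) t)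
    (hC : ∀ t ∈ Set.Ioo a b, C ≤ g' t) : C * (b - a) ≤ g b - g a := by
  have := mvt_upper (fun t => -g t) (fun t => -g' t) (C := -C) hab
    (fun t ht => (hg t ht).neg) (fun t ht => by have := hC t ht; linarith)
  linarith

/-- Algebraic decay at a degenerate (Riccati-type) rest point: if `F(ρ*) = 0`,
`F′(ρ*) = 0`, `F″(ρ*) < 0` and `F < 0` for `ρ > ρ*`, then solutions of `ρ′ = F(ρ)`
starting slightly above `ρ*` satisfy `c₁/x ≤ ρ(x) − ρ* ≤ c₂/x` for large `x`. -/
theorem stmt13 (F : ℝ → ℝ) (hF : ContDiff ℝ 1 F) (ρs : ℝ)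
    (h0 : F ρs = 0) (h1 : deriv F ρs = 0)
    (L : ℝ) (h2 : HasDerivAt (deriv F) L ρs) (hL : L < 0)
    (hneg : ∀ ρ > ρs, F ρ < 0) :
    ∃ δ > (0:ℝ), ∀ u : ℝ → ℝ,
      u 0 ∈ Set.Ioo ρs (ρs + δ) →
      (∀ x ∈ Set.Ici (0:ℝ), HasDerivAt u (F (u x)) x) →
      ∃ c₁ c₂ X : ℝ, 0 < c₁ ∧ c₁ ≤ c₂ ∧ 0 < X ∧
        ∀ x ≥ X, c₁ / x ≤ u x - ρs ∧ u x - ρs ≤ c₂ / x := by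
  have hnL : 0 < -L := by linarith
  have hdF : ∀ t, HasDerivAt F (deriv F t) t :=
    fun t => (hF.differentiable one_ne_zero t).hasDerivAt
  -- Step 1: quadratic bounds on F near ρs
  obtain ⟨δ, hδ, hquad⟩ : ∃ δ > (0:ℝ), ∀ ρ ∈ Set.Ioo ρs (ρs + δ),
      L * (ρ - ρs)^2 ≤ F ρ ∧ F ρ ≤ L/4 * (ρ - ρs)^2 := by
    have hslope := hasDerivAt_iff_tendsto_slope.mp h2
    have hev : ∀ᶠ ρ in 𝓝[≠] ρs, slope (deriv F) ρs ρ ∈ Set.Ioo (3*L/2) (L/2) :=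
      hslope (Ioo_mem_nhds (by linarith) (by linarith))
    rw [eventually_iff, Metric.mem_nhdsWithin_iff] at hev
    obtain ⟨ε, hε, hsub⟩ := hev
    -- first: derivative bounds
    have hd : ∀ t ∈ Set.Ioo ρs (ρs + ε),
        3*L/2 * (t - ρs) ≤ deriv F t ∧ deriv F t ≤ L/2 * (t - ρs) := by
      intro t ht
      have hts : 0 < t - ρs := sub_pos.2 ht.1
      have hmem : t ∈ Metric.ball ρs ε ∩ {ρs}ᶜ := by
        constructor
        · rw [Metric.mem_ball, Real.dist_eq, abs_of_pos hts]
          linarith [ht.2]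
        · exact ne_of_gt ht.1
      have hsl := hsub hmem
      rw [Set.mem_setOf_eq, slope_def_field, h1, sub_zero] at hsl
      obtain ⟨hsl1, hsl2⟩ := hsl
      constructor
      · rw [lt_div_iff₀ hts] at hsl1; linarith
      · rw [div_lt_iff₀ hts] at hsl2; linarith
    refine ⟨ε, hε, fun ρ hρ => ?_⟩
    have hρs : 0 < ρ - ρs := sub_pos.2 hρ.1
    have hsubIoo : Set.Ioo ρs ρ ⊆ Set.Ioo ρs (ρs + ε) :=
      Set.Ioo_subset_Ioo le_rfl hρ.2.le
    -- derivative of t ↦ c * (t - ρs)^2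
    have hq : ∀ (c : ℝ) (t : ℝ), HasDerivAt (fun t => c * (t - ρs)^2) (c * (2*(t - ρs))) t := by
      intro c t
      have h := (((hasDerivAt_id t).sub_const ρs).pow 2).const_mul c
      refine h.congr_deriv ?_
      simp only [id_eq]
      push_cast
      ring
    constructor
    · -- lower bound: F ρ ≥ 3L/4 (ρ-ρs)² ≥ L (ρ-ρs)²
      have := mvt_lower (fun t => F t - 3*L/4 * (t - ρs)^2)
        (fun t => deriv F t - 3*L/4 * (2*(t - ρs))) (C := 0) (le_of_lt hρ.1)
        (fun t _ => (hdF t).sub (hq (3*L/4) t))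
        (fun t ht => by
          have := (hd t (hsubIoo ht)).1
          have hts : 0 < t - ρs := sub_pos.2 ht.1
          nlinarith)
      simp only [sub_self, ne_eq, OfNat.ofNat_ne_zero, not_false_eq_true, zero_pow,
        mul_zero, sub_zero, h0, zero_sub] at this
      nlinarith [sq_nonneg (ρ - ρs)]
    · have := mvt_upper (fun t => F t - L/4 * (t - ρs)^2)
        (fun t => deriv F t - L/4 * (2*(t - ρs))) (C := 0) (le_of_lt hρ.1)
        (fun t _ => (hdF t).sub (hq (L/4) t))
        (fun t ht => by
          have := (hd t (hsubIoo ht)).2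
          have hts : 0 < t - ρs := sub_pos.2 ht.1
          nlinarith)
      simp only [sub_self, ne_eq, OfNat.ofNat_ne_zero, not_false_eq_true, zero_pow,
        mul_zero, sub_zero, h0, zero_sub] at this
      nlinarith
  refine ⟨δ, hδ, fun u hu0 hderiv => ?_⟩
  have hv0 : 0 < u 0 - ρs := sub_pos.2 hu0.1
  -- Step 2: solutions stay in (ρs, ρs + δ)
  have key : ∀ x ≥ (0:ℝ), u x ∈ Set.Ioo ρs (ρs + δ) := by
    by_contra hbad
    push_neg at hbad
    obtain ⟨x₀, hx₀, hx₀'⟩ := hbad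
    set B := {x : ℝ | 0 ≤ x ∧ u x ∉ Set.Ioo ρs (ρs + δ)} with hB
    have hBne : B.Nonempty := ⟨x₀, hx₀, hx₀'⟩
    have hBbdd : BddBelow B := ⟨0, fun x hx => hx.1⟩
    set x₁ := sInf B with hx₁def
    have hx₁0 : 0 ≤ x₁ := le_csInf hBne fun x hx => hx.1
    have hucont : ∀ x, 0 ≤ x → ContinuousAt u x := fun x hx => (hderiv x hx).continuousAt
    have hx₁mem : u x₁ ∉ Set.Ioo ρs (ρs + δ) := by
      obtain ⟨s, _, hstend, hsmem⟩ := exists_seq_tendsto_sInf hBne hBbdd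
      have htend : Tendsto (u ∘ s) atTop (𝓝 (u x₁)) := (hucont x₁ hx₁0).tendsto.comp hstend
      exact isOpen_Ioo.isClosed_compl.mem_of_tendsto htend
        (Eventually.of_forall fun n => (hsmem n).2)
    have hgood : ∀ t, 0 ≤ t → t < x₁ → u t ∈ Set.Ioo ρs (ρs + δ) := by
      intro t ht htl
      by_contra h
      exact absurd (csInf_le hBbdd ⟨ht, h⟩) (not_le.2 htl)
    have hx₁pos : 0 < x₁ := hx₁0.lt_of_ne fun h => hx₁mem (by rw [← h]; exact hu0)
    have htleft : Tendsto u (𝓝[<] x₁) (𝓝 (u x₁)) :=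
      ((hucont x₁ hx₁0).tendsto).mono_left nhdsWithin_le_nhds
    have hevIoo : ∀ᶠ t in 𝓝[<] x₁, t ∈ Set.Ioo 0 x₁ :=
      Ioo_mem_nhdsLT_of_mem ⟨hx₁pos, le_refl x₁⟩
    have hx₁Icc : u x₁ ∈ Set.Icc ρs (ρs + δ) :=
      isClosed_Icc.mem_of_tendsto htleft
        (hevIoo.mono fun t ht => Set.Ioo_subset_Icc_self (hgood t ht.1.le ht.2))
    have hcases : u x₁ = ρs ∨ u x₁ = ρs + δ := by
      obtain ⟨ha, hb⟩ := hx₁Icc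
      by_contra hc
      push_neg at hc
      exact hx₁mem ⟨lt_of_le_of_ne ha (Ne.symm hc.1), lt_of_le_of_ne hb hc.2⟩
    rcases hcases with hcase | hcase
    · -- u x₁ = ρs : contradiction via 1/(u - ρs) bound
      set M := (u 0 - ρs)⁻¹ + (-L) * x₁ with hMdef
      have hM : 0 < M := add_pos (inv_pos.2 hv0) (mul_pos hnL hx₁pos)
      have hlow : ∀ᶠ t in 𝓝[<] x₁, M⁻¹ ≤ u t - ρs := by
        refine hevIoo.mono fun b hb => ?_
        have hvb : 0 < u b - ρs := sub_pos.2 (hgood b hb.1.le hb.2).1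
        have hder : ∀ t ∈ Set.Icc 0 b,
            HasDerivAt (fun t => (u t - ρs)⁻¹) (-(F (u t)) / (u t - ρs)^2) t := by
          intro t ht
          have hg := hgood t ht.1 (lt_of_le_of_lt ht.2 hb.2)
          exact ((hderiv t ht.1).sub_const ρs).inv (sub_ne_zero.2 (ne_of_gt hg.1))
        have hCb : ∀ t ∈ Set.Ioo 0 b, -(F (u t)) / (u t - ρs)^2 ≤ -L := by
          intro t ht
          have hg := hgood t ht.1.le (ht.2.trans hb.2)
          have hq := (hquad _ hg).1
          have hv2 : 0 < (u t - ρs)^2 := pow_pos (sub_pos.2 hg.1) 2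
          rw [div_le_iff₀ hv2]
          nlinarith
        have hmvt := mvt_upper _ _ hb.1.le hder hCb
        have hbineq : (u b - ρs)⁻¹ ≤ M := by
          have h1' : -L * b ≤ -L * x₁ := mul_le_mul_of_nonneg_left hb.2.le hnL.le
          simp only [sub_zero] at hmvt
          rw [hMdef]
          linarith
        calc M⁻¹ ≤ ((u b - ρs)⁻¹)⁻¹ := inv_anti₀ (inv_pos.2 hvb) hbineq
          _ = u b - ρs := inv_inv _
      have htend : Tendsto (fun t => u t - ρs) (𝓝[<] x₁) (𝓝 (u x₁ - ρs)) :=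
        htleft.sub_const ρs
      have := ge_of_tendsto htend hlow
      rw [hcase, sub_self] at this
      have := inv_pos.2 hM
      linarith
    · -- u x₁ = ρs + δ : contradiction since u is nonincreasing
      have hmvt := mvt_upper u (fun t => F (u t)) hx₁pos.le
        (fun t ht => hderiv t ht.1)
        (fun t ht => (hneg _ (hgood t ht.1.le ht.2).1).le)
      simp only [zero_mul, sub_zero] at hmvt
      rw [hcase] at hmvt
      have := hu0.2
      linarith
  -- Step 3: differential inequalities for 1/(u - ρs)
  have hv : ∀ x, 0 ≤ x → 0 < u x - ρs := fun x hx => sub_pos.2 (key x hx).1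
  have hbound : ∀ x, 0 < x →
      (u 0 - ρs)⁻¹ + (-L/4) * x ≤ (u x - ρs)⁻¹ ∧
      (u x - ρs)⁻¹ ≤ (u 0 - ρs)⁻¹ + (-L) * x := by
    intro x hx
    have hder : ∀ t ∈ Set.Icc 0 x,
        HasDerivAt (fun t => (u t - ρs)⁻¹) (-(F (u t)) / (u t - ρs)^2) t := by
      intro t ht
      exact ((hderiv t ht.1).sub_const ρs).inv ((hv t ht.1).ne')
    have hup : ∀ t ∈ Set.Ioo 0 x, -(F (u t)) / (u t - ρs)^2 ≤ -L := by
      intro t ht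
      have hq := (hquad _ (key t ht.1.le)).1
      have hv2 : 0 < (u t - ρs)^2 := pow_pos (hv t ht.1.le) 2
      rw [div_le_iff₀ hv2]; nlinarith
    have hlo : ∀ t ∈ Set.Ioo 0 x, -L/4 ≤ -(F (u t)) / (u t - ρs)^2 := by
      intro t ht
      have hq := (hquad _ (key t ht.1.le)).2
      have hv2 : 0 < (u t - ρs)^2 := pow_pos (hv t ht.1.le) 2
      rw [le_div_iff₀ hv2]; nlinarith
    have h1' := mvt_upper _ _ hx.le hder hup
    have h2' := mvt_lower _ _ hx.le hder hlo
    simp only [sub_zero] at h1' h2'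
    constructor <;> linarith
  -- conclusion
  refine ⟨(2 * (-L))⁻¹, 4 / (-L), max 1 ((u 0 - ρs)⁻¹ / (-L)), by positivity, ?_, ?_, ?_⟩
  · rw [← one_div, div_le_div_iff₀ (by linarith) hnL]
    linarith
  · exact lt_of_lt_of_le one_pos (le_max_left _ _)
  · intro x hx
    have hx1 : (1:ℝ) ≤ x := le_trans (le_max_left _ _) hx
    have hxpos : 0 < x := lt_of_lt_of_le one_pos hx1
    obtain ⟨hb1, hb2⟩ := hbound x hxpos
    have hA : 0 < (u 0 - ρs)⁻¹ := inv_pos.2 hv0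
    have hvx : 0 < u x - ρs := hv x hxpos.le
    constructor
    · -- lower bound
      have hXx : (u 0 - ρs)⁻¹ / (-L) ≤ x := le_trans (le_max_right _ _) hx
      have hAx : (u 0 - ρs)⁻¹ ≤ -L * x := by
        rw [div_le_iff₀ hnL] at hXx; linarith
      have h2' : (u x - ρs)⁻¹ ≤ 2 * (-L) * x := by linarith
      have := inv_anti₀ (inv_pos.2 hvx) h2'
      rw [inv_inv] at this
      have heq : (2 * (-L) * x)⁻¹ = (2 * (-L))⁻¹ / x := by
        rw [mul_inv, div_eq_mul_inv]
      linarith [heq ▸ this]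
    · -- upper bound
      have h1' : -L/4 * x ≤ (u x - ρs)⁻¹ := by nlinarith
      have hpos : 0 < -L/4 * x := by positivity
      have := inv_anti₀ hpos h1'
      rw [inv_inv] at this
      have heq : (-L/4 * x)⁻¹ = 4 / (-L) / x := by
        field_simp
      linarith [heq ▸ this]
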